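/- Let M be a nonempty set and P : M × [0, ∞) → ℝ with P ≥ 0. Let T₁ > 0, c' ∈ (0, 1], x₀ ∈ M, and t₀ ∈ [0, T₁] with Q := P(x₀, t₀) > 0, and suppose that c' · P(x, s) · (T₁ − s) ≤ Q · (T₁ − t₀) for all x ∈ M and all s ∈ [0, T₁]. Then for every x ∈ M and every t with −t₀ · Q ≤ t < (T₁ − t₀) · Q, the rescaled function satisfies P_Q(x, t) ≤ (1/c') · (T₁ − t₀) Q / ((T₁ − t₀) Q − t). -/

import Mathlib

/-- Type IIa curvature bound on the dilated solutions: if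
`c' P(x,s)(T₁-s) ≤ Q(T₁-t₀)` for all `x ∈ M`, `s ∈ [0, T₁]`, with `Q := P(x₀,t₀) > 0`,
then the rescaled function `P_Q(x,t) = P(x, t₀ + t/Q)/Q` satisfies
`P_Q(x,t) ≤ (1/c') (T₁-t₀)Q / ((T₁-t₀)Q - t)` for `-t₀ Q ≤ t < (T₁-t₀) Q`. -/
theorem stmt6 (M : Type*) [Nonempty M]
    (P : M → ℝ → ℝ)
    (hP : ∀ (x : M) (t : ℝ), 0 ≤ t → 0 ≤ P x t)
    (T₁ : ℝ) (hT₁ : 0 < T₁) (c' : ℝ) (hc' : c' ∈ Set.Ioc (0:ℝ) 1)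
    (x₀ : M) (t₀ : ℝ) (ht₀ : t₀ ∈ Set.Icc (0:ℝ) T₁) (hQ : 0 < P x₀ t₀)
    (hbound : ∀ (x : M), ∀ s ∈ Set.Icc (0:ℝ) T₁,
      c' * (P x s * (T₁ - s)) ≤ P x₀ t₀ * (T₁ - t₀)) :
    ∀ (x : M) (t : ℝ), -(t₀ * P x₀ t₀) ≤ t → t < (T₁ - t₀) * P x₀ t₀ →
      P x (t₀ + t / P x₀ t₀) / P x₀ t₀ ≤
        (1 / c') * ((T₁ - t₀) * P x₀ t₀ / ((T₁ - t₀) * P x₀ t₀ - t)) := by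
  intro x t ht1 ht2
  set Q := P x₀ t₀ with hQdef
  set s := t₀ + t / Q with hs
  have hQ' : 0 < Q := hQ
  have hsmem : s ∈ Set.Icc (0:ℝ) T₁ := by
    constructor
    · have : -t₀ ≤ t / Q := by
        rw [le_div_iff₀ hQ']; linarith
      show 0 ≤ t₀ + t / Q; linarith
    · have : t / Q < T₁ - t₀ := by
        rw [div_lt_iff₀ hQ']; linarith [ht2]
      show t₀ + t / Q ≤ T₁; linarith
  have hTs : T₁ - s = ((T₁ - t₀) * Q - t) / Q := by
    rw [hs, eq_div_iff hQ'.ne']; linear_combination (-1 : ℝ) * div_mul_cancel₀ t hQ'.ne'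
  have hpos : 0 < (T₁ - t₀) * Q - t := by linarith
  have hTspos : 0 < T₁ - s := by rw [hTs]; positivity
  have hb := hbound x s hsmem
  have hc0 := hc'.1
  -- from hb : c' * (P x s * (T₁ - s)) ≤ Q * (T₁ - t₀)
  rw [div_le_iff₀ hQ']
  have key : P x s ≤ Q * (T₁ - t₀) / (c' * (T₁ - s)) := by
    rw [le_div_iff₀ (by positivity)]
    nlinarith [hbound x s hsmem]
  calc P x s ≤ Q * (T₁ - t₀) / (c' * (T₁ - s)) := key
    _ = 1 / c' * ((T₁ - t₀) * Q / ((T₁ - t₀) * Q - t)) * Q := by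
        rw [hTs]; field_simp
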